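/- Exponential of a Jordan block: let B, P, N be n×n complex matrices and b ∈ ℂ, d ≥ 1 with P² = P, B·P = P·B, B·P = b·P + N, N·P = P·N = N, and N^d = 0. Then for every t ∈ ℝ, exp(tB)·P = e^{tb} · Σ_{k=0}^{d−1} (t^k/k!) · N^k · P. Consequently ‖exp(tB)·P‖ ≤ e^{t·Re(b)} · Σ_{k=0}^{d−1} (t^k/k!)·‖N^k P‖ for all t ≥ 0. -/

import Mathlib

attribute [local instance] Matrix.linftyOpNormedRing Matrix.linftyOpNormedAlgebra

open NormedSpace Finset

noncomputable section

lemma exp_mul_proj_aux {n : ℕ} (X Y P : Matrix (Fin n) (Fin n) ℂ)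
    (hYP : Y * P = P * Y) (h : X * P = Y * P) :
    exp X * P = exp Y * P := by
  have hpow : ∀ k : ℕ, X ^ k * P = Y ^ k * P := by
    intro k
    induction k with
    | zero => simp
    | succ k ih =>
      rw [pow_succ, pow_succ, mul_assoc, h, hYP, ← mul_assoc, ih, mul_assoc, ← hYP, ← mul_assoc]
  rw [exp_eq_tsum (𝕂 := ℂ)]
  dsimp only
  erw [← (expSeries_summable' (𝕂 := ℂ) X).tsum_mul_right P,
    ← (expSeries_summable' (𝕂 := ℂ) Y).tsum_mul_right P]
  simp_rw [smul_mul_assoc, hpow]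

/-- Exponential of a Jordan block: if `P² = P`, `B` commutes with `P`,
`B·P = b·P + N`, `N·P = P·N = N` and `N^d = 0`, then
`exp(tB)·P = e^{tb} Σ_{k<d} (t^k/k!) N^k P`, and consequently
`‖exp(tB)·P‖ ≤ e^{t·Re b} Σ_{k<d} (t^k/k!)·‖N^k P‖` for `t ≥ 0`. -/
theorem exp_jordan_block
    {n : ℕ} (B P N : Matrix (Fin n) (Fin n) ℂ) (b : ℂ) (d : ℕ) (hd : 1 ≤ d)
    (hPidem : P * P = P)
    (hcomm : B * P = P * B)
    (hBP : B * P = b • P + N)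
    (hNP : N * P = N) (hPN : P * N = N)
    (hNnil : N ^ d = 0) :
    (∀ t : ℝ,
        exp (t • B) * P =
          Complex.exp ((t : ℂ) * b) •
            ∑ k ∈ range d, (((t : ℂ) ^ k / (Nat.factorial k : ℂ)) • (N ^ k * P))) ∧
      ∀ t : ℝ, 0 ≤ t →
        ‖exp (t • B) * P‖ ≤
          Real.exp (t * b.re) *
            ∑ k ∈ range d, t ^ k / (Nat.factorial k : ℝ) * ‖N ^ k * P‖ := by
  have main : ∀ t : ℝ,
      exp (t • B) * P =
        Complex.exp ((t : ℂ) * b) •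
          ∑ k ∈ range d, (((t : ℂ) ^ k / (Nat.factorial k : ℂ)) • (N ^ k * P)) := by
    intro t
    have htB : (t : ℝ) • B = ((t : ℂ)) • B := by
      rw [← algebraMap_smul ℂ t B]; norm_num
    set A : Matrix (Fin n) (Fin n) ℂ := ((t : ℂ) * b) • P with hA
    set M : Matrix (Fin n) (Fin n) ℂ := (t : ℂ) • N with hM
    -- step 1: exp(tB) P = exp(A + M) P
    have hY : (A + M) * P = P * (A + M) := by
      rw [hA, hM, add_mul, mul_add, smul_mul_assoc, smul_mul_assoc, mul_smul_comm,
        mul_smul_comm, hPidem, hNP, hPN]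
    have hXY : ((t : ℂ) • B) * P = (A + M) * P := by
      rw [smul_mul_assoc, hBP, hA, hM, add_mul, smul_mul_assoc, smul_mul_assoc,
        hPidem, hNP, smul_add, smul_smul]
    have step1 : exp (t • B) * P = exp (A + M) * P := by
      rw [htB]; exact exp_mul_proj_aux _ _ _ hY hXY
    -- step 2: A and M commute
    have hAM : Commute A M :=
      by
        show A * M = M * A
        rw [hA, hM, smul_mul_assoc, smul_mul_assoc, mul_smul_comm, mul_smul_comm,
          hNP, hPN, smul_smul, smul_smul, mul_comm]
    -- exp(A) P = e^{tb} P
    have hexpA : exp A * P = Complex.exp ((t : ℂ) * b) • P := by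
      have h1 : exp A * P = exp (((t : ℂ) * b) • (1 : Matrix (Fin n) (Fin n) ℂ)) * P := by
        apply exp_mul_proj_aux
        · rw [smul_mul_assoc, one_mul, mul_smul_comm, mul_one]
        · rw [hA, smul_mul_assoc, smul_mul_assoc, one_mul, hPidem]
      rw [h1]
      have : (((t : ℂ) * b) • (1 : Matrix (Fin n) (Fin n) ℂ)) =
          algebraMap ℂ (Matrix (Fin n) (Fin n) ℂ) ((t : ℂ) * b) := by
        simp [Algebra.algebraMap_eq_smul_one]
      erw [this, ← algebraMap_exp_comm, Algebra.algebraMap_eq_smul_one, smul_mul_assoc, one_mul,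
        Complex.exp_eq_exp_ℂ]
    -- exp(M) = finite sum
    have hexpM : exp M = ∑ k ∈ range d, ((t : ℂ) ^ k / (Nat.factorial k : ℂ)) • N ^ k := by
      rw [exp_eq_tsum (𝕂 := ℂ)]
      dsimp only
      rw [tsum_eq_sum (s := range d)]
      · apply Finset.sum_congr rfl
        intro k _
        rw [hM, smul_pow, smul_smul, div_eq_inv_mul]
      · intro k hk
        rw [hM, smul_pow]
        have : N ^ k = 0 := by
          have hdk : d ≤ k := by simpa using hk
          rw [← Nat.sub_add_cancel hdk, pow_add, hNnil, mul_zero]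
        rw [this, smul_zero, smul_zero]
    calc exp (t • B) * P = exp (A + M) * P := step1
      _ = exp M * (exp A * P) := by
          rw [add_comm A M, Matrix.exp_add_of_commute M A hAM.symm, mul_assoc]
      _ = Complex.exp ((t : ℂ) * b) • (exp M * P) := by
          rw [hexpA, mul_smul_comm]
      _ = Complex.exp ((t : ℂ) * b) •
            ∑ k ∈ range d, (((t : ℂ) ^ k / (Nat.factorial k : ℂ)) • (N ^ k * P)) := by
          rw [hexpM, Finset.sum_mul]
          simp_rw [smul_mul_assoc]
  refine ⟨main, ?_⟩
  intro t ht
  rw [main t, norm_smul]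
  have h1 : ‖Complex.exp ((t : ℂ) * b)‖ = Real.exp (t * b.re) := by
    rw [Complex.norm_exp]
    congr 1
    simp
  rw [h1]
  gcongr
  refine (norm_sum_le _ _).trans ?_
  apply Finset.sum_le_sum
  intro k _
  rw [norm_smul]
  apply mul_le_mul_of_nonneg_right _ (norm_nonneg _)
  have : ((t : ℂ) ^ k / (Nat.factorial k : ℂ)) = ((t ^ k / (Nat.factorial k : ℝ) : ℝ) : ℂ) := by
    push_cast; ring
  rw [this, Complex.norm_real, Real.norm_eq_abs, abs_of_nonneg (by positivity)]
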